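/- Let n ≥ 1 and define polynomials f_n(x) = Σ_{k=0}^{n} (−1)^{n−k} · C(n+k, n−k) · x^{2k}. Let m ≥ 2 be an integer and x = 2cos(π/m). If 1 ≤ k ≤ ⌈m/2⌉ − 1, then f_k(x) ≥ 0. -/

import Mathlib

open Finset Real

noncomputable def Sf (n : ℕ) (x : ℝ) : ℝ :=
  ∑ k ∈ Finset.range (n + 1), (-1 : ℝ) ^ (n - k) * (Nat.choose (n + k) (n - k)) * x ^ (2 * k)

lemma choose4 (a b : ℕ) :
    (a+2).choose (b+2) + a.choose b = a.choose (b+2) + 2 * (a+1).choose (b+1) := by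
  simp [Nat.choose_succ_succ]
  ring

lemma Sf_rec (x : ℝ) (n : ℕ) : Sf (n+2) x = (x^2 - 2) * Sf (n+1) x - Sf n x := by
  have h1 : x^2 * Sf (n+1) x
      = ∑ k ∈ Finset.range (n+3),
          (if k = 0 then 0 else
            (-1:ℝ)^(n+2-k) * ((Nat.choose (n+k) (n+2-k) : ℕ) : ℝ) * x^(2*k)) := by
    rw [Finset.sum_range_succ']
    simp only [reduceIte, add_zero]
    rw [Sf, Finset.mul_sum]
    apply Finset.sum_congr rfl
    intro k hk
    rw [if_neg (Nat.succ_ne_zero k)]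
    have e1 : n + 2 - (k + 1) = n + 1 - k := by omega
    have e2 : n + (k + 1) = n + 1 + k := by omega
    rw [e1, e2]
    ring
  have h2 : (2:ℝ) * Sf (n+1) x
      = ∑ k ∈ Finset.range (n+3),
          (if k ≤ n+1 then
            2 * ((-1:ℝ)^(n+1-k) * ((Nat.choose (n+1+k) (n+1-k) : ℕ) : ℝ) * x^(2*k)) else 0) := by
    rw [Finset.sum_range_succ, if_neg (by omega : ¬ (n+2 ≤ n+1)), add_zero, Sf, Finset.mul_sum]
    apply Finset.sum_congr rfl
    intro k hk
    simp only [Finset.mem_range] at hk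
    rw [if_pos (by omega : k ≤ n+1)]
  have h3 : Sf n x
      = ∑ k ∈ Finset.range (n+3),
          (if k ≤ n then (-1:ℝ)^(n-k) * ((Nat.choose (n+k) (n-k) : ℕ) : ℝ) * x^(2*k) else 0) := by
    rw [Finset.sum_range_succ, Finset.sum_range_succ, if_neg (by omega : ¬ (n+2 ≤ n)),
      if_neg (by omega : ¬ (n+1 ≤ n)), add_zero, add_zero, Sf]
    apply Finset.sum_congr rfl
    intro k hk
    simp only [Finset.mem_range] at hk
    rw [if_pos (by omega : k ≤ n)]
  have expand : (x^2 - 2) * Sf (n+1) x - Sf n x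
      = x^2 * Sf (n+1) x - (2:ℝ) * Sf (n+1) x - Sf n x := by ring
  rw [expand, h1, h2, h3, ← Finset.sum_sub_distrib, ← Finset.sum_sub_distrib]
  rw [Sf]
  apply Finset.sum_congr rfl
  intro k hk
  simp only [Finset.mem_range] at hk
  by_cases h0 : k = 0
  · subst h0
    rw [if_pos rfl, if_pos (by omega : 0 ≤ n+1), if_pos (by omega : 0 ≤ n)]
    simp only [Nat.add_zero, Nat.sub_zero, Nat.choose_self, Nat.cast_one]
    have hp2 : (-1:ℝ)^(n+2) = (-1)^n := by rw [pow_add]; norm_num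
    have hp1 : (-1:ℝ)^(n+1) = -(-1:ℝ)^n := by rw [pow_add]; norm_num
    rw [hp2, hp1]
    ring
  · by_cases hn : k ≤ n
    · obtain ⟨d, rfl⟩ : ∃ d, n = k + d := ⟨n - k, by omega⟩
      have e1 : k + d + 2 - k = d + 2 := by omega
      have e2 : k + d + 1 - k = d + 1 := by omega
      have e3 : k + d - k = d := by omega
      rw [if_neg h0, if_pos (by omega : k ≤ k + d + 1), if_pos hn, e1, e2, e3]
      have hcr : (((k+d+2+k).choose (d+2) : ℕ) : ℝ) + (((k+d+k).choose d : ℕ) : ℝ)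
          = (((k+d+k).choose (d+2) : ℕ) : ℝ) + 2 * (((k+d+1+k).choose (d+1) : ℕ) : ℝ) := by
        have e4 : k + d + 2 + k = (k + d + k) + 2 := by omega
        have e5 : k + d + 1 + k = (k + d + k) + 1 := by omega
        rw [e4, e5]
        exact_mod_cast choose4 (k + d + k) d
      linear_combination ((-1:ℝ)^d * x^(2*k)) * hcr
    · by_cases h1 : k = n + 1
      · subst h1
        rw [if_neg h0, if_pos (le_refl (n+1)), if_neg (by omega : ¬ (n+1 ≤ n))]
        have e1 : n + 2 - (n + 1) = 1 := by omega
        have e2 : n + 1 - (n + 1) = 0 := by omega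
        rw [e1, e2, Nat.choose_one_right, Nat.choose_one_right, Nat.choose_zero_right]
        push_cast
        ring
      · have h2' : k = n + 2 := by omega
        subst h2'
        rw [if_neg h0, if_neg (by omega : ¬ (n+2 ≤ n+1)), if_neg (by omega : ¬ (n+2 ≤ n))]
        have e1 : n + 2 - (n + 2) = 0 := by omega
        rw [e1, Nat.choose_zero_right, Nat.choose_zero_right]
        push_cast
        ring

lemma Sf_sin (θ : ℝ) (n : ℕ) :
    Sf n (2 * Real.cos θ) * Real.sin θ = Real.sin ((2*(n:ℝ)+1) * θ) := by
  set x := 2 * Real.cos θ with hx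
  have base0 : Sf 0 x = 1 := by simp [Sf]
  have base1 : Sf 1 x = x^2 - 1 := by
    simp [Sf, Finset.sum_range_succ]
    ring
  have H : ∀ n : ℕ, (Sf n x * Real.sin θ = Real.sin ((2*(n:ℝ)+1) * θ)) ∧
      (Sf (n+1) x * Real.sin θ = Real.sin ((2*((n:ℝ)+1)+1) * θ)) := by
    intro n
    induction n with
    | zero =>
      constructor
      · rw [base0]
        norm_num
      · rw [base1, hx]
        norm_num
        rw [show ((3:ℝ) * θ) = 3 * θ from rfl, Real.sin_three_mul]
        linear_combination (4 * Real.sin θ) * (Real.sin_sq_add_cos_sq θ)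
    | succ n ih =>
      refine ⟨by push_cast; exact ih.2, ?_⟩
      push_cast
      rw [Sf_rec, sub_mul, mul_assoc, ih.2, ih.1]
      have e5 : (2*(((n:ℝ)+1)+1)+1)*θ = ((2*(n:ℝ)+3)*θ) + 2*θ := by ring
      have e3 : (2*((n:ℝ)+1)+1)*θ = (2*(n:ℝ)+3)*θ := by ring
      have e1 : (2*(n:ℝ)+1)*θ = ((2*(n:ℝ)+3)*θ) - 2*θ := by ring
      rw [e5, e3, e1, Real.sin_add, Real.sin_sub, Real.cos_two_mul, hx]
      ring
  exact (H n).1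

theorem stmt_12 (m : ℕ) (hm : 2 ≤ m) (x : ℝ) (hx : x = 2 * Real.cos (Real.pi / m))
    (f : ℕ → ℝ → ℝ)
    (hf : ∀ (n : ℕ) (y : ℝ), f n y =
      ∑ k ∈ Finset.range (n + 1), (-1 : ℝ) ^ (n - k) * (Nat.choose (n + k) (n - k)) * y ^ (2 * k)) :
    ∀ k : ℕ, 1 ≤ k → k ≤ (m + 1) / 2 - 1 → 0 ≤ f k x := by
  intro k hk1 hk2
  have hm1 : (1:ℝ) < m := by exact_mod_cast (by omega : 1 < m)
  set θ := Real.pi / m with hθ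
  have hθpos : 0 < θ := div_pos Real.pi_pos (by linarith)
  have hθlt : θ < Real.pi := div_lt_self Real.pi_pos hm1
  have hs : 0 < Real.sin θ := Real.sin_pos_of_pos_of_lt_pi hθpos hθlt
  have hkm : 2 * k + 1 ≤ m := by omega
  have hkmr : (2*(k:ℝ)+1) ≤ m := by exact_mod_cast hkm
  have h2 : 0 ≤ Real.sin ((2*(k:ℝ)+1) * θ) := by
    apply Real.sin_nonneg_of_nonneg_of_le_pi
    · positivity
    · calc (2*(k:ℝ)+1) * θ ≤ m * θ := by
            apply mul_le_mul_of_nonneg_right hkmr (le_of_lt hθpos)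
        _ = Real.pi := by
            rw [hθ]; field_simp
  have hkey := Sf_sin θ k
  have hfx : f k x = Sf k (2 * Real.cos θ) := by
    rw [hf, hx, hθ]; rfl
  rw [hfx]
  nlinarith [hkey, hs, h2]
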